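/- For a fixed composition β, the subsets A ⊆ E(T) containing all leaf edges of the proper caterpillar T = Ψ(β) are in bijection with the coarsenings α of β, and this bijection preserves the induced partition: λ(A) = λ(α). -/

import Mathlib

/-- A composition: a nonempty list of positive integers. -/
def IsComposition (l : List ℕ) : Prop := l ≠ [] ∧ ∀ x ∈ l, 0 < x

/-- `Coarsens α β` : α is a coarsening of β, i.e. α is obtained from β by
summing blocks of consecutive components. -/
def Coarsens (α β : List ℕ) : Prop :=
  ∃ P : List (List ℕ), P.flatten = β ∧ (∀ p ∈ P, p ≠ []) ∧ α = P.map List.sum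

/-- All ways of splitting a list into blocks of consecutive elements. -/
def splits : List ℕ → List (List (List ℕ))
  | [] => [[]]
  | a :: rest =>
    (splits rest).flatMap fun s =>
      match s with
      | [] => [[[a]]]
      | b :: bs => [(a :: b) :: bs, [a] :: b :: bs]

/-- The list of all coarsenings of a composition. -/
def coarsenings (β : List ℕ) : List (List ℕ) :=
  (splits β).map (fun P => P.map List.sum)

/-- The L-polynomial of a composition, encoded as the multiset of monomials
`x_{λ(α)}` over coarsenings `α` of `β`; each monomial is recorded as the
multiset (partition) of the components of `α`. -/
def Lpoly (β : List ℕ) : Multiset (Multiset ℕ) :=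
  ((coarsenings β).map fun α => (α : Multiset ℕ) : List (Multiset ℕ))

/-- Near-concatenation of compositions. -/
def odot : List ℕ → List ℕ → List ℕ
  | [], β => β
  | [a], [] => [a]
  | [a], b :: bs => (a + b) :: bs
  | a :: b :: as, β => a :: odot (b :: as) β

/-- `odotPow α i` is the `i`-fold near-concatenation `α^{⊙i}`. -/
def odotPow (α : List ℕ) : ℕ → List ℕ
  | 0 => []
  | n + 1 => odot (odotPow α n) α

/-- The composition product `β ∘ α = α^{⊙β₁} · α^{⊙β₂} ⋯ α^{⊙β_k}`. -/
def circ (β α : List ℕ) : List ℕ :=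
  (β.map (odotPow α)).flatten

/-- A trivial factorization `β ∘ γ`. -/
def TrivialFact (β γ : List ℕ) : Prop :=
  β = [1] ∨ γ = [1] ∨ (β.length = 1 ∧ γ.length = 1) ∨
    ((∀ b ∈ β, b = 1) ∧ (∀ c ∈ γ, c = 1))

/-- A composition admitting only trivial factorizations. -/
def IrredComp (f : List ℕ) : Prop :=
  ∀ β γ : List ℕ, IsComposition β → IsComposition γ → f = circ β γ → TrivialFact β γ

/-- Product of a list of compositions under `∘` (with identity `[1]`). -/
def circList : List (List ℕ) → List ℕ
  | [] => [1]
  | f :: fs => circ f (circList fs)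

/-- `fs` is an irreducible factorization of `α`:
all factors are irreducible compositions, and no consecutive product
`α_i ∘ α_{i+1}` is a trivial factorization. -/
def IsIrredFactorization (α : List ℕ) (fs : List (List ℕ)) : Prop :=
  fs ≠ [] ∧ (∀ f ∈ fs, IsComposition f ∧ IrredComp f) ∧
    fs.Chain' (fun a b => ¬ TrivialFact a b) ∧ α = circList fs

/-- `N(γ) = |γ| - ℓ(γ)`. -/
def Nstat (γ : List ℕ) : ℕ := γ.sum - γ.length


open SimpleGraph

/-- Degree of a vertex (as the number of neighbors). -/
noncomputable def deg {V : Type} [Fintype V] (T : SimpleGraph V) (v : V) : ℕ :=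
  (T.neighborSet v).ncard

/-- The partition of `|V|` given by the sizes of the connected components of `G`. -/
noncomputable def compPartition {V : Type} [Fintype V] (G : SimpleGraph V) : Multiset ℕ :=
  letI : Fintype G.ConnectedComponent := Fintype.ofFinite _
  (Finset.univ : Finset G.ConnectedComponent).val.map fun c => Nat.card c.supp

/-- The U-polynomial of a graph, encoded as the multiset of monomials `x_{λ(A)}`
over edge subsets `A`; each monomial is recorded as the partition `λ(A)`. -/
noncomputable def Upoly {V : Type} [Fintype V] (T : SimpleGraph V) : Multiset (Multiset ℕ) :=
  letI := Classical.decEq V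
  letI : DecidablePred fun A : Finset (Sym2 V) => ↑A ⊆ T.edgeSet :=
    fun _ => Classical.propDecidable _
  (((Finset.univ : Finset (Sym2 V)).powerset.filter
      fun A => ↑A ⊆ T.edgeSet)).val.map
    fun A => compPartition (SimpleGraph.fromEdgeSet (↑A : Set (Sym2 V)))

/-- The set of leaf-edges of a graph: edges incident to a vertex of degree 1. -/
def leafEdges {V : Type} [Fintype V] (T : SimpleGraph V) : Set (Sym2 V) :=
  {e | e ∈ T.edgeSet ∧ ∃ v ∈ e, deg T v = 1}

/-- The restricted U-polynomial: only edge subsets containing all leaf-edges. -/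
noncomputable def UpolyL {V : Type} [Fintype V] (T : SimpleGraph V) : Multiset (Multiset ℕ) :=
  letI := Classical.decEq V
  letI : DecidablePred fun A : Finset (Sym2 V) =>
      (↑A : Set (Sym2 V)) ⊆ T.edgeSet ∧ leafEdges T ⊆ (↑A : Set (Sym2 V)) :=
    fun _ => Classical.propDecidable _
  (((Finset.univ : Finset (Sym2 V)).powerset.filter
      fun A : Finset (Sym2 V) => (↑A : Set (Sym2 V)) ⊆ T.edgeSet ∧ leafEdges T ⊆ (↑A : Set (Sym2 V)))).val.map
    fun A => compPartition (SimpleGraph.fromEdgeSet (↑A : Set (Sym2 V)))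

/-- The edges along a list of vertices (consecutive pairs). -/
def spineEdges {V : Type} (s : List V) : Set (Sym2 V) :=
  {e | ∃ i : ℕ, ∃ h : i + 1 < s.length,
    e = s(s.get ⟨i, Nat.lt_of_succ_lt h⟩, s.get ⟨i + 1, h⟩)}

/-- `s` is the spine of `T`: a nonempty path whose vertices are exactly the
internal (degree ≥ 2) vertices of `T`. -/
def IsSpine {V : Type} [Fintype V] (T : SimpleGraph V) (s : List V) : Prop :=
  s ≠ [] ∧ s.Nodup ∧ s.Chain' T.Adj ∧ ∀ v : V, v ∈ s ↔ 2 ≤ deg T v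

/-- A caterpillar: a tree whose internal vertices induce a non-trivial path. -/
def IsCaterpillar {V : Type} [Fintype V] (T : SimpleGraph V) : Prop :=
  T.IsTree ∧ ∃ s : List V, IsSpine T s

/-- A proper caterpillar: every spine vertex is adjacent to at least one leaf. -/
def IsProperCaterpillar {V : Type} [Fintype V] (T : SimpleGraph V) : Prop :=
  T.IsTree ∧ ∃ s : List V, IsSpine T s ∧ ∀ v ∈ s, ∃ w, T.Adj v w ∧ deg T w = 1

/-- The composition associated to a caterpillar with spine `s`: the `i`-th
component is the size of the connected component of the `i`-th spine vertex
after deleting all spine edges. -/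
noncomputable def catComp {V : Type} [Fintype V] (T : SimpleGraph V) (s : List V) : List ℕ :=
  s.map fun v =>
    Nat.card ((T.deleteEdges (spineEdges s)).connectedComponentMk v).supp

/-- Setting `x₁ = 0` in a polynomial encoded as a multiset of monomials:
all monomials containing `x₁` vanish. -/
def evalXoneZero (P : Multiset (Multiset ℕ)) : Multiset (Multiset ℕ) :=
  P.filter fun m => (1 : ℕ) ∉ m




namespace CatAux

/-- blocks of the interval `[a, a+n)` determined by gap indicator `g`:
the gap between `i` and `i+1` is kept (merged) iff `g i`. -/
def iblk (g : ℕ → Bool) : ℕ → ℕ → List (List ℕ)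
  | _, 0 => []
  | a, n+1 =>
    match iblk g (a+1) n with
    | [] => [[a]]
    | b :: bs => if g a then (a :: b) :: bs else [a] :: b :: bs

lemma iblk_zero (g : ℕ → Bool) (a : ℕ) : iblk g a 0 = [] := rfl

lemma iblk_flatten (g : ℕ → Bool) : ∀ n a, (iblk g a n).flatten = List.range' a n := by
  intro n
  induction n with
  | zero => intro a; rfl
  | succ n ih =>
    intro a
    show (match iblk g (a+1) n with
      | [] => [[a]]
      | b :: bs => if g a then (a :: b) :: bs else [a] :: b :: bs).flatten = _
    rcases h : iblk g (a+1) n with _ | ⟨b, bs⟩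
    · have := ih (a+1); rw [h] at this
      simp [List.range'_succ, ← this]
    · have := ih (a+1); rw [h] at this
      by_cases hg : g a <;> simp [hg, List.range'_succ, ← this]

lemma iblk_ne_nil (g : ℕ → Bool) {n : ℕ} (hn : 0 < n) (a : ℕ) : iblk g a n ≠ [] := by
  intro h
  have := iblk_flatten g n a
  rw [h] at this
  simp at this
  omega

lemma iblk_blocks (g : ℕ → Bool) : ∀ n a, ∀ b ∈ iblk g a n,
    ∃ st len, 0 < len ∧ b = List.range' st len ∧
      (∀ k, st ≤ k → k + 1 < st + len → g k = true) ∧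
      (st + len < a + n → g (st + len - 1) = false) := by
  intro n
  induction n with
  | zero => intro a b hb; simp [iblk] at hb
  | succ n ih =>
    intro a b hb
    have hb' : b ∈ (match iblk g (a+1) n with
      | [] => [[a]]
      | c :: bs => if g a then (a :: c) :: bs else [a] :: c :: bs) := hb
    rcases h : iblk g (a+1) n with _ | ⟨c, bs⟩
    · rw [h] at hb'; simp at hb'
      refine ⟨a, 1, by omega, by simp [hb'], by omega, ?_⟩
      intro hlt
      exfalso
      have hfl := iblk_flatten g n (a+1)
      rw [h] at hfl
      simp [List.range'_eq_nil_iff] at hfl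
      omega
    · rw [h] at hb'
      have hb2 : b ∈ (if g a then (a :: c) :: bs else [a] :: c :: bs) := hb'
      by_cases hg : g a
      · rw [if_pos hg] at hb2
        rcases List.mem_cons.mp hb2 with rfl | hmem
        · obtain ⟨st, len, hlen, hc, hgap, hend⟩ := ih (a+1) c (h ▸ List.mem_cons_self)
          -- head of c is a+1
          have hst : st = a + 1 := by
            have hfl := iblk_flatten g n (a+1)
            rw [h] at hfl
            simp only [List.flatten_cons] at hfl
            obtain ⟨l, rfl⟩ : ∃ l, len = l + 1 := ⟨len - 1, by omega⟩
            rw [List.range'_succ] at hc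
            obtain ⟨m, rfl⟩ : ∃ m, n = m + 1 := by
              cases n with
              | zero => exfalso; simp at hfl; rw [hc] at hfl; simp at hfl
              | succ m => exact ⟨m, rfl⟩
            rw [List.range'_succ, hc] at hfl
            simp at hfl
            exact hfl.1
          subst hst
          refine ⟨a, len + 1, by omega, ?_, ?_, ?_⟩
          · rw [hc, List.range'_succ]
          · intro k hk1 hk2
            rcases Nat.eq_or_lt_of_le hk1 with rfl | hlt
            · exact hg
            · exact hgap k (by omega) (by omega)
          · intro hlt
            have := hend (by omega)
            have heq : a + (len + 1) - 1 = a + 1 + len - 1 := by omega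
            rw [heq]; exact this
        · obtain ⟨st, len, h1, h2, h3, h4⟩ := ih (a+1) b (h ▸ List.mem_cons_of_mem _ hmem)
          exact ⟨st, len, h1, h2, h3, fun hlt => h4 (by omega)⟩
      · rw [if_neg hg] at hb2
        rcases List.mem_cons.mp hb2 with rfl | hmem
        · refine ⟨a, 1, by omega, by simp, by omega, fun _ => by simpa using hg⟩
        · obtain ⟨st, len, h1, h2, h3, h4⟩ := ih (a+1) b (h ▸ hmem)
          exact ⟨st, len, h1, h2, h3, fun hlt => h4 (by omega)⟩

lemma iblk_succ (g : ℕ → Bool) (a n : ℕ) :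
    iblk g a (n+1) = match iblk g (a+1) n with
    | [] => [[a]]
    | b :: bs => if g a then (a :: b) :: bs else [a] :: b :: bs := rfl

lemma iblk_congr {g g' : ℕ → Bool} : ∀ n a,
    (∀ i, a ≤ i → i + 1 < a + n → g i = g' i) → iblk g a n = iblk g' a n := by
  intro n
  induction n with
  | zero => intro a _; rfl
  | succ n ih =>
    intro a hgg
    rw [iblk_succ, iblk_succ, ih (a+1) (fun i h1 h2 => hgg i (by omega) (by omega))]
    rcases h : iblk g' (a+1) n with _ | ⟨b, bs⟩
    · rfl
    · have : g a = g' a := by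
        rcases n with _ | n
        · simp [iblk] at h
        · exact hgg a le_rfl (by omega)
      rw [this]

lemma iblk_ones : ∀ (n : ℕ) (g : ℕ → Bool) (a : ℕ), 0 < n →
    (∀ i, a ≤ i → i + 1 < a + n → g i = true) → iblk g a n = [List.range' a n] := by
  intro n
  induction n with
  | zero => omega
  | succ n ih =>
    intro g a _ hg
    rw [iblk_succ]
    rcases Nat.eq_zero_or_pos n with rfl | hn
    · simp [iblk]
    · rw [ih g (a+1) hn (fun i h1 h2 => hg i (by omega) (by omega))]
      have hga : g a = true := hg a le_rfl (by omega)
      simp [hga, List.range'_succ]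

lemma iblk_split : ∀ (m : ℕ) (n : ℕ) (g : ℕ → Bool) (a : ℕ), 0 < m →
    (n = 0 ∨ g (a + (m-1)) = false) →
    iblk g a (m + n) = iblk g a m ++ iblk g (a + m) n := by
  intro m
  induction m with
  | zero => omega
  | succ m ih =>
    intro n g a _ hgap
    rcases Nat.eq_zero_or_pos n with rfl | hn
    · simp [iblk]
    have hgap' : g (a + m) = false := by
      rcases hgap with h | h
      · omega
      · simpa using h
    rcases Nat.eq_zero_or_pos m with rfl | hm
    · have h1 : 1 + n = n + 1 := by omega
      rw [h1, iblk_succ]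
      rcases h : iblk g (a+1) n with _ | ⟨b, bs⟩
      · exact absurd h (iblk_ne_nil g hn (a+1))
      · have hga : g a = false := by simpa using hgap'
        rw [hga]
        simp [iblk]
    · have h1 : m + 1 + n = (m + n) + 1 := by omega
      rw [h1, iblk_succ]
      have h2 : iblk g (a+1) (m + n) = iblk g (a+1) m ++ iblk g (a+1+m) n := by
        refine ih n g (a+1) hm (Or.inr ?_)
        have : a + 1 + (m - 1) = a + m := by omega
        rw [this]; exact hgap'
      rcases h : iblk g (a+1) m with _ | ⟨b, bs⟩
      · exact absurd h (iblk_ne_nil g hm (a+1))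
      · rw [h] at h2
        rw [h2]
        have h3 : a + (m + 1) = a + 1 + m := by omega
        rw [iblk_succ, h, h3]
        by_cases hga : g a <;> simp [hga]

lemma iblk_realize : ∀ (P : List (List ℕ)) (a : ℕ), (∀ p ∈ P, p ≠ []) →
    ∃ g : ℕ → Bool, (iblk g a (P.map List.length).sum).map List.length = P.map List.length := by
  intro P
  induction P with
  | nil => intro a _; exact ⟨fun _ => true, rfl⟩
  | cons p P ih =>
    intro a hne
    obtain ⟨g', hg'⟩ := ih (a + p.length) (fun q hq => hne q (List.mem_cons_of_mem _ hq))
    have hk : 0 < p.length := List.length_pos_iff.mpr (hne p (List.mem_cons_self))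
    set k := p.length with hkdef
    refine ⟨fun i => if i < a + k - 1 then true else if i = a + k - 1 then false else g' i, ?_⟩
    have hsum : ((p :: P).map List.length).sum = k + (P.map List.length).sum := by simp; rfl
    rw [hsum]
    rw [iblk_split k _ _ a hk (Or.inr (by simp; omega))]
    have hones : iblk (fun i => if i < a + k - 1 then true else if i = a + k - 1 then false else g' i) a k
        = [List.range' a k] := by
      refine iblk_ones k _ a hk ?_
      intro i h1 h2
      simp
      omega
    have hcongr : iblk (fun i => if i < a + k - 1 then true else if i = a + k - 1 then false else g' i) (a + k) (P.map List.length).sum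
        = iblk g' (a + k) (P.map List.length).sum := by
      refine iblk_congr _ _ ?_
      intro i h1 _
      have : ¬ i < a + k - 1 := by omega
      have : ¬ i = a + k - 1 := by omega
      simp_all
    rw [hones, hcongr]
    simp [hg']
    exact hkdef

lemma eq_of_shape : ∀ (L L' : List (List ℕ)), L.map List.length = L'.map List.length →
    L.flatten = L'.flatten → L = L' := by
  intro L
  induction L with
  | nil =>
    intro L' h1 _
    simp at h1
    exact h1.symm
  | cons p L ih =>
    intro L' h1 h2
    rcases L' with _ | ⟨p', L'⟩
    · simp at h1
    · simp only [List.map_cons, List.cons.injEq] at h1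
      simp only [List.flatten_cons] at h2
      obtain ⟨hp, hL⟩ := List.append_inj h2 h1.1
      rw [hp, ih L' h1.2 hL]

lemma splitEq : ∀ (P P' : List (List ℕ)), P.flatten = P'.flatten →
    (∀ p ∈ P, p ≠ []) → (∀ p ∈ P', p ≠ []) → (∀ x ∈ P.flatten, 0 < x) →
    P.map List.sum = P'.map List.sum → P = P' := by
  intro P
  induction P with
  | nil =>
    intro P' _ _ _ _ h5
    simp at h5
    exact h5.symm
  | cons p P ih =>
    intro P' h1 h2 h3 h4 h5
    rcases P' with _ | ⟨p', P'⟩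
    · simp at h5
    simp only [List.map_cons, List.cons.injEq] at h5
    simp only [List.flatten_cons] at h1 h4
    have hpp : p = p' := by
      rcases List.append_eq_append_iff.mp h1 with ⟨t, ht1, ht2⟩ | ⟨t, ht1, ht2⟩
      · -- p' = p ++ t
        have hsum : p.sum + t.sum = p.sum := by
          have := h5.1
          rw [ht1] at this
          simpa using this.symm
        have ht0 : t.sum = 0 := by omega
        have : t = [] := by
          rcases t with _ | ⟨x, t⟩
          · rfl
          · exfalso
            have hx : 0 < x := by
              refine h4 x ?_
              rw [ht2]; simp
            simp [List.sum_cons] at ht0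
            omega
        rw [ht1, this, List.append_nil]
      · -- p = p' ++ t
        have hsum : p'.sum + t.sum = p'.sum := by
          have := h5.1
          rw [ht1] at this
          simpa using this
        have ht0 : t.sum = 0 := by omega
        have : t = [] := by
          rcases t with _ | ⟨x, t⟩
          · rfl
          · exfalso
            have hx : 0 < x := by
              refine h4 x ?_
              rw [ht1]; simp
            simp [List.sum_cons] at ht0
            omega
        rw [ht1, this, List.append_nil]
    subst hpp
    have hflat : P.flatten = P'.flatten := by
      exact (List.append_right_injective p) h1
    rw [ih P' hflat (fun q hq => h2 q (List.mem_cons_of_mem _ hq))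
      (fun q hq => h3 q (List.mem_cons_of_mem _ hq))
      (fun x hx => h4 x (by simp [hx])) h5.2]

lemma pos_unique {L : List (List ℕ)} (h : L.flatten.Nodup) {p q : Fin L.length} {x : ℕ}
    (hx : x ∈ L.get p) (hy : x ∈ L.get q) : p = q := by
  by_contra hpq
  have hdisj := (List.nodup_flatten.mp h).2
  rw [List.pairwise_iff_get] at hdisj
  rcases Nat.lt_or_ge p.val q.val with hlt | hge
  · exact hdisj p q hlt hx hy
  · have hlt : q < p := lt_of_le_of_ne hge (by simpa [Fin.ext_iff, eq_comm] using hpq)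
    exact hdisj q p hlt hy hx

lemma iblk_g_of_sameBlock {g : ℕ → Bool} {n a i : ℕ} {b : List ℕ}
    (hb : b ∈ iblk g a n) (h1 : i ∈ b) (h2 : i + 1 ∈ b) : g i = true := by
  obtain ⟨st, len, _, rfl, hgap, _⟩ := iblk_blocks g n a b hb
  simp [List.mem_range'] at h1 h2
  exact hgap i (by omega) (by omega)

lemma iblk_sameBlock_of_g {g : ℕ → Bool} {n a i : ℕ}
    (h1 : a ≤ i) (h2 : i + 1 < a + n) (hg : g i = true) :
    ∃ b ∈ iblk g a n, i ∈ b ∧ i + 1 ∈ b := by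
  have hmem : i ∈ (iblk g a n).flatten := by
    rw [iblk_flatten, List.mem_range'_1]; omega
  obtain ⟨b, hb, hib⟩ := List.mem_flatten.mp hmem
  obtain ⟨st, len, hlen, hbeq, hgap, hend⟩ := iblk_blocks g n a b hb
  subst hbeq
  rw [List.mem_range'_1] at hib
  have hstlen : st + len ≤ a + n := by
    have hmem2 : st + len - 1 ∈ (iblk g a n).flatten :=
      List.mem_flatten.mpr ⟨_, hb, by rw [List.mem_range'_1]; omega⟩
    rw [iblk_flatten, List.mem_range'_1] at hmem2
    omega
  have hi1 : i + 1 < st + len := by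
    rcases Nat.lt_or_ge (i+1) (st+len) with h | h
    · exact h
    · exfalso
      have hieq : i = st + len - 1 := by omega
      rcases Nat.lt_or_ge (st + len) (a + n) with hlt | hge
      · have hfalse := hend hlt
        rw [← hieq, hg] at hfalse
        simp at hfalse
      · omega
  exact ⟨_, hb, by rw [List.mem_range'_1]; omega, by rw [List.mem_range'_1]; omega⟩

end CatAux

namespace CatAux
lemma bool_eq_of_iff {a b : Bool} (h : (a = true) ↔ (b = true)) : a = b := by
  cases a <;> cases b <;> simp_all
end CatAux

section Graph

open SimpleGraph

variable {V : Type} [Fintype V] {T : SimpleGraph V} {s : List V} {f : ℕ → V}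

/-- Packaged hypotheses about the spine enumeration. -/
structure SpineData (T : SimpleGraph V) (s : List V) (f : ℕ → V) : Prop where
  hf : ∀ (i : ℕ) (h : i < s.length), f i = s.get ⟨i, h⟩
  hT : T.IsTree
  hs : IsSpine T s

namespace SpineData

variable (SD : SpineData T s f)
include SD

lemma hadj {i : ℕ} (h : i + 1 < s.length) : T.Adj (f i) (f (i + 1)) := by
  have := (List.isChain_iff_getElem.mp SD.hs.2.2.1) i (by omega)
  rw [SD.hf i (by omega), SD.hf (i+1) h]
  exact this

lemma hinj {i j : ℕ} (hi : i < s.length) (hj : j < s.length) (hij : f i = f j) : i = j := by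
  rw [SD.hf i hi, SD.hf j hj] at hij
  have := SD.hs.2.1.get_inj_iff.mp hij
  simpa using this

lemma hmem {i : ℕ} (hi : i < s.length) : f i ∈ s := by
  rw [SD.hf i hi]; exact List.get_mem s ⟨i, hi⟩

lemma hrep {v : V} (hv : v ∈ s) : ∃ i, i < s.length ∧ v = f i := by
  obtain ⟨⟨i, hi⟩, hg⟩ := List.mem_iff_get.mp hv
  exact ⟨i, hi, by rw [SD.hf i hi, hg]⟩

lemma deg_ge_two {i : ℕ} (hi : i < s.length) : 2 ≤ deg T (f i) :=
  (SD.hs.2.2.2 _).mp (SD.hmem hi)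

lemma spine_edge_mem {e : Sym2 V} :
    e ∈ spineEdges s ↔ ∃ i, i + 1 < s.length ∧ e = s(f i, f (i+1)) := by
  constructor
  · rintro ⟨i, h, rfl⟩
    exact ⟨i, h, by rw [SD.hf i (by omega), SD.hf (i+1) h]⟩
  · rintro ⟨i, h, rfl⟩
    exact ⟨i, h, by rw [SD.hf i (by omega), SD.hf (i+1) h]⟩

/-- Existence of the spine segment path. -/
lemma spine_path : ∀ (d i j : ℕ), i + d = j → j < s.length →
    ∃ p : T.Walk (f i) (f j), p.IsPath ∧
      p.edges = (List.range' i d).map (fun k => s(f k, f (k+1))) ∧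
      p.support = (List.range' i (d+1)).map f := by
  intro d
  induction d with
  | zero =>
    intro i j hij hj
    subst hij
    exact ⟨Walk.nil.copy rfl (by simp), by simp, by simp, by simp⟩
  | succ d ih =>
    intro i j hij hj
    obtain ⟨p, hp, hpe, hps⟩ := ih (i+1) j (by omega) hj
    refine ⟨Walk.cons (SD.hadj (by omega)) p, ?_, ?_, ?_⟩
    · rw [Walk.cons_isPath_iff]
      refine ⟨hp, ?_⟩
      rw [hps]
      intro hmem
      obtain ⟨k, hk, hkf⟩ := List.mem_map.mp hmem
      rw [List.mem_range'_1] at hk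
      have := SD.hinj (by omega) (by omega) hkf.symm
      omega
    · rw [Walk.edges_cons, hpe]
      have : List.range' i (d+1) = i :: List.range' (i+1) d := List.range'_succ
      rw [this, List.map_cons]
    · rw [Walk.support_cons, hps]
      have : List.range' i (d+1+1) = i :: List.range' (i+1) (d+1) := List.range'_succ
      rw [this, List.map_cons]

/-- Adjacent spine vertices are consecutive. -/
lemma adj_spine_succ {i j : ℕ} (hij : i < j) (hj : j < s.length)
    (hadj : T.Adj (f i) (f j)) : j = i + 1 := by
  by_contra hne
  have h2 : i + 1 < j := by omega
  obtain ⟨p, hp, hpe, _⟩ := SD.spine_path (j - i) i j (by omega) hj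
  have hcyc : (Walk.cons hadj.symm p).IsCycle := by
    refine SimpleGraph.Path.cons_isCycle ⟨p, hp⟩ hadj.symm ?_
    rw [hpe]
    intro hmem
    obtain ⟨k, hk, hkf⟩ := List.mem_map.mp hmem
    rw [List.mem_range'_1] at hk
    rw [Sym2.eq_iff] at hkf
    rcases hkf with ⟨h1, h2'⟩ | ⟨h1, h2'⟩
    · have := SD.hinj (by omega) (by omega) h1.symm
      have := SD.hinj (by omega) (by omega) h2'.symm
      omega
    · have := SD.hinj (by omega) (by omega) h1.symm
      have := SD.hinj (by omega) (by omega) h2'.symm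
      omega
  exact SD.hT.IsAcyclic _ hcyc

/-- Every edge of `T` is a spine edge or a leaf edge. -/
lemma edge_classify {e : Sym2 V} (he : e ∈ T.edgeSet) :
    e ∈ spineEdges s ∨ e ∈ leafEdges T := by
  induction e with
  | _ u v =>
    rw [mem_edgeSet] at he
    by_cases hu : deg T u = 1
    · exact Or.inr ⟨he, u, Sym2.mem_mk_left _ _, hu⟩
    by_cases hv : deg T v = 1
    · exact Or.inr ⟨he, v, Sym2.mem_mk_right _ _, hv⟩
    -- both havdeg ≥ 2
    have hNu : (T.neighborSet u).Nonempty := ⟨v, he⟩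
    have hNv : (T.neighborSet v).Nonempty := ⟨u, he.symm⟩
    have hu2 : 2 ≤ deg T u := by
      have : deg T u ≠ 0 := by
        simp only [deg]
        intro h0
        rw [Set.ncard_eq_zero (Set.toFinite _)] at h0
        exact hNu.ne_empty h0
      omega
    have hv2 : 2 ≤ deg T v := by
      have : deg T v ≠ 0 := by
        simp only [deg]
        intro h0
        rw [Set.ncard_eq_zero (Set.toFinite _)] at h0
        exact hNv.ne_empty h0
      omega
    obtain ⟨i, hi, rfl⟩ := SD.hrep ((SD.hs.2.2.2 u).mpr hu2)
    obtain ⟨j, hj, rfl⟩ := SD.hrep ((SD.hs.2.2.2 v).mpr hv2)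
    have hij : i ≠ j := fun h => (T.irrefl (h ▸ he)).elim
    left
    rcases Nat.lt_or_ge i j with hlt | hge
    · have := SD.adj_spine_succ hlt hj he
      subst this
      exact (SD.spine_edge_mem).mpr ⟨i, hj, rfl⟩
    · have hlt : j < i := by omega
      have := SD.adj_spine_succ hlt hi he.symm
      subst this
      exact (SD.spine_edge_mem).mpr ⟨j, hi, Sym2.eq_swap⟩

lemma spine_subset_edgeSet : spineEdges s ⊆ T.edgeSet := by
  intro e he
  obtain ⟨i, hi, rfl⟩ := (SD.spine_edge_mem).mp he
  exact SD.hadj hi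

lemma spine_leaf_disjoint {e : Sym2 V} (he : e ∈ spineEdges s) : e ∉ leafEdges T := by
  obtain ⟨i, hi, rfl⟩ := (SD.spine_edge_mem).mp he
  rintro ⟨_, w, hw, hdw⟩
  rcases Sym2.mem_iff.mp hw with rfl | rfl
  · have := SD.deg_ge_two (i := i) (by omega); omega
  · have := SD.deg_ge_two (i := i+1) hi; omega

/-- Different spine vertices are in different components after deleting spine edges. -/
lemma spine_separated {i j : ℕ} (hij : i ≠ j) (hi : i < s.length) (hj : j < s.length) :
    ¬ (T.deleteEdges (spineEdges s)).Reachable (f i) (f j) := by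
  -- wlog i < j
  have key : ∀ i j : ℕ, i < j → j < s.length →
      ¬ (T.deleteEdges (spineEdges s)).Reachable (f i) (f j) := by
    clear hij hi hj i j
    intro i j hij hj hreach
    classical
    obtain ⟨w⟩ := hreach
    set D := T.deleteEdges (spineEdges s) with hD
    have hDT : ∀ e ∈ (w.toPath : D.Walk (f i) (f j)).edges, e ∈ T.edgeSet := by
      intro e he
      have := Walk.edges_subset_edgeSet _ he
      rw [hD, edgeSet_deleteEdges] at this
      exact this.1
    set q := ((w.toPath : D.Walk (f i) (f j)).transfer T hDT) with hq
    have hqp : q.IsPath := (Walk.IsPath.transfer hDT w.toPath.2)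
    obtain ⟨p, hp, hpe, _⟩ := SD.spine_path (j - i) i j (by omega) hj
    have hpq : (⟨p, hp⟩ : T.Path (f i) (f j)) = ⟨q, hqp⟩ :=
      SD.hT.IsAcyclic.path_unique _ _
    have hedge : s(f i, f (i+1)) ∈ p.edges := by
      rw [hpe]
      exact List.mem_map.mpr ⟨i, by rw [List.mem_range'_1]; omega, rfl⟩
    have hpq' : p = q := congrArg Subtype.val hpq
    rw [hpq'] at hedge
    have := hedge
    rw [hq, Walk.edges_transfer] at this
    have hmem := Walk.edges_subset_edgeSet _ this
    rw [hD, edgeSet_deleteEdges] at hmem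
    exact hmem.2 ((SD.spine_edge_mem).mpr ⟨i, by omega, rfl⟩)
  rcases Nat.lt_or_ge i j with hlt | hge
  · exact key i j hlt hj
  · intro hreach
    exact key j i (by omega) hi hreach.symm

end SpineData

end Graph
section Graph2

open SimpleGraph

variable {V : Type} [Fintype V] {T : SimpleGraph V} {s : List V} {f : ℕ → V}

lemma walk_confined {G : SimpleGraph V} {P : V → Prop}
    (hP : ∀ a b, P a → G.Adj a b → P b) :
    ∀ {u w : V}, G.Walk u w → P u → P w := by
  intro u w p
  induction p with
  | nil => exact id
  | cons h p ih => exact fun hu => ih (hP _ _ hu h)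

namespace SpineData

variable (SD : SpineData T s f)
include SD

lemma vertex_reaches_spine (v : V) :
    ∃ i, i < s.length ∧ (T.deleteEdges (spineEdges s)).Reachable v (f i) := by
  have hlen : 0 < s.length := List.length_pos_iff.mpr SD.hs.1
  by_cases hv : 2 ≤ deg T v
  · obtain ⟨i, hi, rfl⟩ := SD.hrep ((SD.hs.2.2.2 v).mpr hv)
    exact ⟨i, hi, Reachable.refl _⟩
  · have hdeg0 : 2 ≤ deg T (f 0) := SD.deg_ge_two hlen
    have hvf0 : v ≠ f 0 := fun h => hv (h ▸ hdeg0)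
    have hreach : T.Reachable v (f 0) := SD.hT.isConnected.preconnected v (f 0)
    -- v has a neighbor
    have hnb : (T.neighborSet v).Nonempty := by
      obtain ⟨p⟩ := hreach
      cases p with
      | nil => exact absurd rfl hvf0
      | cons h _ => exact ⟨_, h⟩
    have hdv : deg T v = 1 := by
      have h1 : 0 < deg T v := by
        simp only [deg]
        exact Set.ncard_pos (Set.toFinite _) |>.mpr hnb
      omega
    obtain ⟨w, hw⟩ := Set.ncard_eq_one.mp hdv
    have hvw : T.Adj v w := by
      have : w ∈ T.neighborSet v := by rw [hw]; exact rfl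
      exact this
    have hvnotspine : v ∉ s := fun h => hv ((SD.hs.2.2.2 v).mp h)
    -- w has degree ≥ 2
    have hdw : 2 ≤ deg T w := by
      by_contra hw2
      have hnbw : v ∈ T.neighborSet w := hvw.symm
      have hdw1 : deg T w = 1 := by
        have h1 : 0 < deg T w := by
          simp only [deg]
          exact Set.ncard_pos (Set.toFinite _) |>.mpr ⟨v, hnbw⟩
        omega
      obtain ⟨x, hx⟩ := Set.ncard_eq_one.mp hdw1
      have hxv : x = v := by
        have : v ∈ ({x} : Set V) := hx ▸ hnbw
        simpa using this.symm
      rw [hxv] at hx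
      -- component of v is {v, w}
      have hconf : ∀ u : V, (u = v ∨ u = w) → ∀ z, T.Adj u z → (z = v ∨ z = w) := by
        rintro u (rfl | rfl) z hz
        · have : z ∈ ({w} : Set V) := hw ▸ hz
          simpa using Or.inr this
        · have : z ∈ ({v} : Set V) := hx ▸ hz
          simpa using Or.inl this
      obtain ⟨p⟩ := hreach
      have := walk_confined (G := T) (P := fun u => u = v ∨ u = w)
        (fun a b ha hab => hconf a ha b hab) p (Or.inl rfl)
      rcases this with h | h
      · rw [h] at hdeg0; omega
      · rw [h] at hdeg0; rw [hdw1] at hdeg0; omega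
    obtain ⟨i, hi, rfl⟩ := SD.hrep ((SD.hs.2.2.2 w).mpr hdw)
    refine ⟨i, hi, Adj.reachable ?_⟩
    rw [deleteEdges_adj]
    refine ⟨hvw, fun hsp => ?_⟩
    obtain ⟨k, hk, hke⟩ := (SD.spine_edge_mem).mp hsp
    rw [Sym2.eq_iff] at hke
    rcases hke with ⟨h1, _⟩ | ⟨h1, _⟩
    · exact hvnotspine (h1 ▸ SD.hmem (Nat.lt_of_succ_lt hk))
    · exact hvnotspine (h1 ▸ SD.hmem hk)

end SpineData

end Graph2
section Graph3

open SimpleGraph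

lemma multiset_univ_map {C : Type} (inst : Fintype C) {k : ℕ} (e : Fin k ≃ C) (h : C → ℕ) :
    ((@Finset.univ C inst).val).map h = (((List.finRange k).map (fun p => h (e p)) : List ℕ) : Multiset ℕ) := by
  have h1 : (@Finset.univ C inst).val = Multiset.map e (Finset.univ.val : Multiset (Fin k)) :=
    (Multiset.map_univ_val_equiv e).symm
  rw [h1, Multiset.map_map]
  have h2 : (Finset.univ.val : Multiset (Fin k)) = ((List.finRange k : List (Fin k)) : Multiset (Fin k)) := by
    rw [Fin.univ_def]
  rw [h2, Multiset.map_coe]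
  rfl

open Classical in
/-- gap indicator of an edge subset -/
noncomputable def gOf {V : Type} (s : List V) (f : ℕ → V) (A : Finset (Sym2 V)) : ℕ → Bool :=
  fun i => if (i + 1 < s.length ∧ s(f i, f (i+1)) ∈ A) then true else false

/-- component sizes after deleting the spine -/
noncomputable def szOf {V : Type} [Fintype V] (T : SimpleGraph V) (s : List V) (f : ℕ → V) : ℕ → ℕ :=
  fun k => Nat.card ((T.deleteEdges (spineEdges s)).connectedComponentMk (f k)).supp

variable {V : Type} [Fintype V] {T : SimpleGraph V} {s : List V} {f : ℕ → V}

namespace SpineData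

variable (SD : SpineData T s f)
include SD

lemma central (A : Finset (Sym2 V)) (hA : (↑A : Set (Sym2 V)) ⊆ T.edgeSet)
    (hleaf : leafEdges T ⊆ (↑A : Set (Sym2 V))) :
    compPartition (fromEdgeSet (↑A : Set (Sym2 V))) =
      (((CatAux.iblk (gOf s f A) 0 s.length).map
        (fun b => (b.map (szOf T s f)).sum) : List ℕ) : Multiset ℕ) := by
  classical
  set n := s.length with hn
  set D := T.deleteEdges (spineEdges s) with hD
  set H := fromEdgeSet (↑A : Set (Sym2 V)) with hH
  set g := gOf s f A with hg
  set B := CatAux.iblk g 0 n with hB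
  have hlen : 0 < n := List.length_pos_iff.mpr SD.hs.1
  have hgiff : ∀ i, g i = true ↔ (i + 1 < n ∧ s(f i, f (i+1)) ∈ A) := by
    intro i
    rw [hg]
    unfold gOf
    by_cases h : (i + 1 < s.length ∧ s(f i, f (i+1)) ∈ A)
    · simp [if_pos h, h, hn]
    · simp [if_neg h, h, hn]
  -- the component index of a vertex
  have hex : ∀ v : V, ∃ i, i < n ∧ D.Reachable v (f i) := SD.vertex_reaches_spine
  choose cIdx hcIdx1 hcIdx2 using hex
  have huniq : ∀ v i, i < n → D.Reachable v (f i) → cIdx v = i := by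
    intro v i hi hr
    by_contra hne
    exact SD.spine_separated hne (hcIdx1 v) hi ((hcIdx2 v).symm.trans hr)
  have hcIdxf : ∀ i, i < n → cIdx (f i) = i := fun i hi => huniq _ i hi (Reachable.refl _)
  -- D ≤ H
  have hDH : ∀ u w : V, D.Adj u w → H.Adj u w := by
    intro u w huw
    rw [hD, deleteEdges_adj] at huw
    rcases SD.edge_classify ((mem_edgeSet T).mpr huw.1) with hsp | hlf
    · exact absurd hsp huw.2
    · rw [hH, fromEdgeSet_adj]
      exact ⟨hleaf hlf, huw.1.ne⟩
  have hDreach : ∀ u w : V, D.Reachable u w → H.Reachable u w :=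
    fun u w h => h.mono (fun u w h => hDH u w h)
  -- blocks
  have hBflat : B.flatten = List.range' 0 n := CatAux.iblk_flatten g n 0
  have hBnodup : B.flatten.Nodup := by rw [hBflat]; exact List.nodup_range'
  have hblockmem : ∀ i, i < n → ∃ p : Fin B.length, i ∈ B.get p := by
    intro i hi
    have : i ∈ B.flatten := by rw [hBflat, List.mem_range'_1]; omega
    obtain ⟨b, hb, hib⟩ := List.mem_flatten.mp this
    obtain ⟨p, hp⟩ := List.mem_iff_get.mp hb
    exact ⟨p, hp ▸ hib⟩
  have hblock_lt : ∀ (p : Fin B.length) (i : ℕ), i ∈ B.get p → i < n := by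
    intro p i hi
    have : i ∈ B.flatten := List.mem_flatten.mpr ⟨_, List.get_mem B p, hi⟩
    rw [hBflat, List.mem_range'_1] at this
    omega
  have hposuniq : ∀ (p q : Fin B.length) (x : ℕ), x ∈ B.get p → x ∈ B.get q → p = q :=
    fun p q x hx hy => CatAux.pos_unique hBnodup hx hy
  -- per-edge same-block
  have hKSadj : ∀ u w : V, H.Adj u w →
      ∃ p : Fin B.length, cIdx u ∈ B.get p ∧ cIdx w ∈ B.get p := by
    intro u w huw
    rw [hH, fromEdgeSet_adj] at huw
    obtain ⟨hmemA, hne⟩ := huw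
    rcases SD.edge_classify (hA hmemA) with hsp | hlf
    · obtain ⟨i, hi, hei⟩ := SD.spine_edge_mem.mp hsp
      have hgi : g i = true := (hgiff i).mpr ⟨hi, hei ▸ hmemA⟩
      obtain ⟨b, hb, h1, h2⟩ :=
        CatAux.iblk_sameBlock_of_g (g := g) (n := n) (a := 0) (Nat.zero_le i) (by omega) hgi
      obtain ⟨p, hp⟩ := List.mem_iff_get.mp hb
      rw [Sym2.eq_iff] at hei
      rcases hei with ⟨h3, h4⟩ | ⟨h3, h4⟩
      · refine ⟨p, ?_, ?_⟩
        · rw [h3, hcIdxf i (by omega), hp]; exact h1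
        · rw [h4, hcIdxf (i+1) hi, hp]; exact h2
      · refine ⟨p, ?_, ?_⟩
        · rw [h3, hcIdxf (i+1) hi, hp]; exact h2
        · rw [h4, hcIdxf i (by omega), hp]; exact h1
    · have hDadj : D.Adj u w := by
        rw [hD, deleteEdges_adj]
        exact ⟨(mem_edgeSet T).mp hlf.1, fun hsp => SD.spine_leaf_disjoint hsp hlf⟩
      have heq : cIdx u = cIdx w :=
        huniq u (cIdx w) (hcIdx1 w) ((hDadj.reachable).trans (hcIdx2 w))
      obtain ⟨p, hp⟩ := hblockmem (cIdx w) (hcIdx1 w)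
      exact ⟨p, heq ▸ hp, hp⟩
  -- reachability implies same block
  have hKS : ∀ u w : V, H.Reachable u w →
      ∃ p : Fin B.length, cIdx u ∈ B.get p ∧ cIdx w ∈ B.get p := by
    intro u w hr
    obtain ⟨q⟩ := hr
    induction q with
    | nil =>
      rename_i u'
      obtain ⟨p, hp⟩ := hblockmem (cIdx u') (hcIdx1 u')
      exact ⟨p, hp, hp⟩
    | cons hadj q ih =>
      rename_i a b c
      obtain ⟨p, hp1, hp2⟩ := ih
      obtain ⟨p', hp1', hp2'⟩ := hKSadj _ _ hadj
      have : p' = p := hposuniq p' p _ hp2' hp1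
      subst this
      exact ⟨p', hp1', hp2⟩
  -- block data
  have hbl := fun p : Fin B.length => CatAux.iblk_blocks g n 0 (B.get p) (List.get_mem B p)
  choose st len hlen0 hbeq hgap hend using hbl
  have hstmem : ∀ p, st p ∈ B.get p := by
    intro p
    rw [hbeq p, List.mem_range'_1]
    have := hlen0 p
    omega
  have hstlt : ∀ p, st p < n := fun p => hblock_lt p _ (hstmem p)
  -- within-block reachability
  have hRS : ∀ (p : Fin B.length) (j k : ℕ), j ∈ B.get p → k ∈ B.get p →
      H.Reachable (f j) (f k) := by
    intro p j k hj hk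
    have hbnd : ∀ x ∈ B.get p, x < n := fun x hx => hblock_lt p x hx
    have haux : ∀ d, st p + d < st p + len p → H.Reachable (f (st p)) (f (st p + d)) := by
      intro d
      induction d with
      | zero => intro _; exact Reachable.refl _
      | succ d ih =>
        intro hd
        have hmem' : st p + d + 1 ∈ B.get p := by
          rw [hbeq p, List.mem_range'_1]; omega
        have hlt' : st p + d + 1 < n := hbnd _ hmem'
        refine (ih (by omega)).trans (Adj.reachable ?_)
        have hgd : g (st p + d) = true := hgap p (st p + d) (by omega) (by omega)
        obtain ⟨_, hmm⟩ := (hgiff _).mp hgd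
        rw [hH, fromEdgeSet_adj]
        refine ⟨hmm, fun hfe => ?_⟩
        have := SD.hinj (i := st p + d) (j := st p + d + 1) (by omega) (by omega) hfe
        omega
    rw [hbeq p, List.mem_range'_1] at hj hk
    have h1 : H.Reachable (f (st p)) (f j) := by
      have := haux (j - st p) (by omega)
      have heq : st p + (j - st p) = j := by omega
      rwa [heq] at this
    have h2 : H.Reachable (f (st p)) (f k) := by
      have := haux (k - st p) (by omega)
      have heq : st p + (k - st p) = k := by omega
      rwa [heq] at this
    exact h1.symm.trans h2
  -- the component associated to each block
  set θ : Fin B.length → H.ConnectedComponent :=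
    fun p => H.connectedComponentMk (f (st p)) with hθ
  have hmemθ : ∀ (p : Fin B.length) (v : V),
      H.connectedComponentMk v = θ p ↔ cIdx v ∈ B.get p := by
    intro p v
    constructor
    · intro hcomp
      have hreach : H.Reachable v (f (st p)) := ConnectedComponent.eq.mp hcomp
      obtain ⟨q, hq1, hq2⟩ := hKS _ _ hreach
      rw [hcIdxf (st p) (hstlt p)] at hq2
      have : q = p := hposuniq q p _ hq2 (hstmem p)
      subst this
      exact hq1
    · intro hv
      have h1 : H.Reachable v (f (cIdx v)) := hDreach _ _ (hcIdx2 v)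
      have h2 : H.Reachable (f (cIdx v)) (f (st p)) := hRS p _ _ hv (hstmem p)
      exact ConnectedComponent.eq.mpr (h1.trans h2)
  have hinj : Function.Injective θ := by
    intro p p' hpp
    have h1 : H.connectedComponentMk (f (st p)) = θ p' := by rw [← hpp]
    have h2 : cIdx (f (st p)) ∈ B.get p' := (hmemθ p' _).mp h1
    rw [hcIdxf (st p) (hstlt p)] at h2
    exact hposuniq p p' _ (hstmem p) h2
  have hsurj : Function.Surjective θ := by
    intro c
    obtain ⟨v, rfl⟩ := Quot.exists_rep c
    obtain ⟨p, hp⟩ := hblockmem (cIdx v) (hcIdx1 v)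
    exact ⟨p, ((hmemθ p v).mpr hp).symm⟩
  -- cardinality of unions of spine components
  have hcard : ∀ (b : List ℕ), b.Nodup → (∀ k ∈ b, k < n) →
      Nat.card {v : V | cIdx v ∈ b} = (b.map (szOf T s f)).sum := by
    intro b
    induction b with
    | nil =>
      intro _ _
      have : {v : V | cIdx v ∈ ([] : List ℕ)} = ∅ := by ext v; simp
      rw [this]
      simp [Nat.card_coe_set_eq]
    | cons k b ih =>
      intro hnd hlt
      have hdk : {v : V | cIdx v = k} = (D.connectedComponentMk (f k)).supp := by
        ext v
        rw [ConnectedComponent.mem_supp_iff, ConnectedComponent.eq, Set.mem_setOf_eq]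
        constructor
        · intro h
          rw [← h]
          exact hcIdx2 v
        · intro h
          exact huniq v k (hlt k (List.mem_cons_self)) h
      have hsplit : {v : V | cIdx v ∈ (k :: b)} = {v : V | cIdx v = k} ∪ {v : V | cIdx v ∈ b} := by
        ext v; simp [List.mem_cons]
      have hdisj : Disjoint {v : V | cIdx v = k} {v : V | cIdx v ∈ b} := by
        rw [Set.disjoint_left]
        intro v hv1 hv2
        rw [Set.mem_setOf_eq] at hv1 hv2
        rw [hv1] at hv2
        exact (List.nodup_cons.mp hnd).1 hv2
      rw [hsplit, Nat.card_coe_set_eq,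
        Set.ncard_union_eq hdisj (Set.toFinite _) (Set.toFinite _)]
      rw [← Nat.card_coe_set_eq, ← Nat.card_coe_set_eq, hdk]
      rw [ih (List.nodup_cons.mp hnd).2 (fun x hx => hlt x (List.mem_cons_of_mem _ hx))]
      simp [szOf]
      rfl
  have hcardθ : ∀ p : Fin B.length,
      Nat.card (θ p).supp = ((B.get p).map (szOf T s f)).sum := by
    intro p
    have hsuppset : (θ p).supp = {v : V | cIdx v ∈ B.get p} := by
      ext v
      rw [ConnectedComponent.mem_supp_iff, Set.mem_setOf_eq]
      exact hmemθ p v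
    rw [hsuppset]
    refine hcard (B.get p) ?_ (fun k hk => hblock_lt p k hk)
    exact (List.nodup_flatten.mp hBnodup).1 _ (List.get_mem B p)
  -- assemble
  let e : Fin B.length ≃ H.ConnectedComponent := Equiv.ofBijective θ ⟨hinj, hsurj⟩
  show compPartition H = _
  unfold compPartition
  rw [multiset_univ_map _ e (fun c => Nat.card c.supp)]
  have hlist : (List.finRange B.length).map (fun p => Nat.card (e p).supp)
      = B.map (fun b => (b.map (szOf T s f)).sum) := by
    have h1 : B.map (fun b => (b.map (szOf T s f)).sum)
        = ((List.finRange B.length).map B.get).map (fun b => (b.map (szOf T s f)).sum) := by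
      rw [List.map_get_finRange]
    rw [h1, List.map_map]
    refine List.map_congr_left ?_
    intro p _
    have : e p = θ p := rfl
    simp only [Function.comp_apply, this]
    exact hcardθ p
  rw [hlist]

end SpineData

end Graph3
/-- For a proper caterpillar `T` with composition `β` (i.e.
`T = Ψ(β)`, `β` having all components ≥ 2), the edge subsets containing all
leaf-edges are in bijection with the coarsenings of `β`, and the bijection
preserves the induced partition. -/
theorem edgeSets_equiv_coarsenings {V : Type} [Fintype V] (β : List ℕ)
    (hβ : ∀ x ∈ β, 2 ≤ x) (hβne : β ≠ [])
    (T : SimpleGraph V) (hT : IsProperCaterpillar T)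
    (s : List V) (hs : IsSpine T s) (hc : catComp T s = β) :
    ∃ e : {A : Finset (Sym2 V) //
            (↑A : Set (Sym2 V)) ⊆ T.edgeSet ∧ leafEdges T ⊆ (↑A : Set (Sym2 V))} ≃
          {α : List ℕ // Coarsens α β},
      ∀ A, compPartition (SimpleGraph.fromEdgeSet (↑A.val : Set (Sym2 V)))
            = ((e A).val : Multiset ℕ) := by
  classical
  have hlen : 0 < s.length := List.length_pos_iff.mpr hs.1
  set n := s.length with hn
  set f : ℕ → V := fun k => s.getD k (s.get ⟨0, hlen⟩) with hfdef
  have hf : ∀ (i : ℕ) (h : i < s.length), f i = s.get ⟨i, h⟩ := by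
    intro i h
    rw [hfdef]
    simp only []
    rw [List.getD_eq_getElem s _ h]
    simp
  have SD : SpineData T s f := ⟨hf, hT.1, hs⟩
  -- β in terms of szOf
  have hs' : s = (List.range' 0 n).map f := by
    refine List.ext_getElem (by simp [hn]) ?_
    intro k h1 h2
    simp only [List.getElem_map, List.getElem_range']
    rw [hf (0 + 1 * k) (by simpa using h1)]
    simp
  have hβ' : β = (List.range' 0 n).map (szOf T s f) := by
    rw [← hc]
    unfold catComp
    have hmm : (List.range' 0 n).map (szOf T s f) = ((List.range' 0 n).map f).map
        (fun v => Nat.card ((T.deleteEdges (spineEdges s)).connectedComponentMk v).supp) := by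
      rw [List.map_map]; rfl
    rw [hmm, ← hs']
  have hβlen : β.length = n := by rw [hβ']; simp
  -- the map from edge-subsets to coarsenings
  set SubA := {A : Finset (Sym2 V) //
      (↑A : Set (Sym2 V)) ⊆ T.edgeSet ∧ leafEdges T ⊆ (↑A : Set (Sym2 V))} with hSubA
  have hval : ∀ A : SubA, Coarsens ((CatAux.iblk (gOf s f A.1) 0 n).map
      (fun b => (b.map (szOf T s f)).sum)) β := by
    intro A
    set g := gOf s f A.1 with hg
    refine ⟨(CatAux.iblk g 0 n).map (List.map (szOf T s f)), ?_, ?_, ?_⟩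
    · rw [← List.map_flatten, CatAux.iblk_flatten, ← hβ']
    · intro p hp
      obtain ⟨b, hb, rfl⟩ := List.mem_map.mp hp
      obtain ⟨st, len, hlen0, rfl, _, _⟩ := CatAux.iblk_blocks g n 0 b hb
      simp [List.range'_eq_nil_iff]
      omega
    · rw [List.map_map]
      rfl
  set Φ : SubA → {α : List ℕ // Coarsens α β} := fun A =>
    ⟨(CatAux.iblk (gOf s f A.1) 0 n).map (fun b => (b.map (szOf T s f)).sum), hval A⟩
    with hΦ
  -- injectivity
  have hΦinj : Function.Injective Φ := by
    intro A A' hAA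
    have hvaleq : (CatAux.iblk (gOf s f A.1) 0 n).map (fun b => (b.map (szOf T s f)).sum)
        = (CatAux.iblk (gOf s f A'.1) 0 n).map (fun b => (b.map (szOf T s f)).sum) :=
      congrArg Subtype.val hAA
    set g := gOf s f A.1 with hg
    set g' := gOf s f A'.1 with hg'
    set B := CatAux.iblk g 0 n with hB
    set B' := CatAux.iblk g' 0 n with hB'
    -- blocks of values
    have hPflat : (B.map (List.map (szOf T s f))).flatten = (B'.map (List.map (szOf T s f))).flatten := by
      rw [← List.map_flatten, ← List.map_flatten, CatAux.iblk_flatten, CatAux.iblk_flatten]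
    have hPne : ∀ (g₀ : ℕ → Bool) (p : List ℕ),
        p ∈ (CatAux.iblk g₀ 0 n).map (List.map (szOf T s f)) → p ≠ [] := by
      intro g₀ p hp
      obtain ⟨b, hb, rfl⟩ := List.mem_map.mp hp
      obtain ⟨st, len, hlen0, rfl, _, _⟩ := CatAux.iblk_blocks g₀ n 0 b hb
      simp [List.range'_eq_nil_iff]
      omega
    have hpos : ∀ x ∈ (B.map (List.map (szOf T s f))).flatten, 0 < x := by
      intro x hx
      rw [← List.map_flatten, CatAux.iblk_flatten, ← hβ'] at hx
      have := hβ x hx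
      omega
    have hsums : (B.map (List.map (szOf T s f))).map List.sum
        = (B'.map (List.map (szOf T s f))).map List.sum := by
      rw [List.map_map, List.map_map]
      exact hvaleq
    have hPeq := CatAux.splitEq _ _ hPflat (hPne g) (hPne g') hpos hsums
    have hBlen : B.map List.length = B'.map List.length := by
      have := congrArg (List.map List.length) hPeq
      rw [List.map_map, List.map_map] at this
      have hcomp : (List.length ∘ List.map (szOf T s f)) = List.length := by
        funext b; simp
      rwa [hcomp] at this
    have hBeq : B = B' := CatAux.eq_of_shape B B' hBlen
      (by rw [hB, hB', CatAux.iblk_flatten, CatAux.iblk_flatten])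
    -- hence the gap indicators agree
    have hgg : ∀ i, i + 1 < n → g i = g' i := by
      intro i hi
      have hiff : (g i = true) ↔ (g' i = true) := by
        constructor
        · intro h
          obtain ⟨b, hb, h1, h2⟩ :=
            CatAux.iblk_sameBlock_of_g (g := g) (n := n) (a := 0) (Nat.zero_le i) (by omega) h
          rw [← hB, hBeq, hB'] at hb
          exact CatAux.iblk_g_of_sameBlock hb h1 h2
        · intro h
          obtain ⟨b, hb, h1, h2⟩ :=
            CatAux.iblk_sameBlock_of_g (g := g') (n := n) (a := 0) (Nat.zero_le i) (by omega) h
          rw [← hB', ← hBeq, hB] at hb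
          exact CatAux.iblk_g_of_sameBlock hb h1 h2
      exact CatAux.bool_eq_of_iff hiff
    -- hence the edge sets agree
    refine Subtype.ext (Finset.ext fun e => ?_)
    have key : ∀ (X Y : SubA), (∀ i, i + 1 < n → gOf s f X.1 i = gOf s f Y.1 i) →
        e ∈ X.1 → e ∈ Y.1 := by
      intro X Y hXY he
      have heT : e ∈ T.edgeSet := X.2.1 he
      rcases SD.edge_classify heT with hsp | hlf
      · obtain ⟨i, hi, rfl⟩ := SD.spine_edge_mem.mp hsp
        have h1 : gOf s f X.1 i = true := by
          unfold gOf
          rw [if_pos ⟨hi, he⟩]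
        have h2 := (hXY i hi) ▸ h1
        unfold gOf at h2
        by_cases hcond : (i + 1 < s.length ∧ s(f i, f (i+1)) ∈ Y.1)
        · exact hcond.2
        · rw [if_neg hcond] at h2; exact absurd h2 (by simp)
      · exact Y.2.2 hlf
    exact ⟨fun h => key A A' hgg h, fun h => key A' A (fun i hi => (hgg i hi).symm) h⟩
  -- surjectivity
  have hΦsurj : Function.Surjective Φ := by
    rintro ⟨α, P, hPflat, hPne, rfl⟩
    obtain ⟨g, hgP⟩ := CatAux.iblk_realize P 0 hPne
    have hsumlen : (P.map List.length).sum = n := by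
      rw [← List.length_flatten, hPflat, hβlen]
    rw [hsumlen] at hgP
    -- build the edge set
    set Aset : Set (Sym2 V) :=
      leafEdges T ∪ {e | ∃ i, i + 1 < n ∧ g i = true ∧ e = s(f i, f (i+1))} with hAset
    set A₀ : Finset (Sym2 V) := (Set.toFinite Aset).toFinset with hA₀
    have hmemA₀ : ∀ e, e ∈ A₀ ↔ e ∈ Aset := by
      intro e
      rw [hA₀, Set.Finite.mem_toFinset]
    have hsub1 : (↑A₀ : Set (Sym2 V)) ⊆ T.edgeSet := by
      intro e he
      rw [Finset.mem_coe, hmemA₀] at he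
      rcases he with h | ⟨i, hi, _, rfl⟩
      · exact h.1
      · exact SD.hadj hi
    have hsub2 : leafEdges T ⊆ (↑A₀ : Set (Sym2 V)) := by
      intro e he
      rw [Finset.mem_coe, hmemA₀]
      exact Or.inl he
    have hgeq : ∀ i, 0 ≤ i → i + 1 < 0 + n → gOf s f A₀ i = g i := by
      intro i _ hi
      rw [Nat.zero_add] at hi
      have hiff : (gOf s f A₀ i = true) ↔ (g i = true) := by
        unfold gOf
        constructor
        · intro h
          by_cases hcond : (i + 1 < s.length ∧ s(f i, f (i+1)) ∈ A₀)
          · obtain ⟨h1, h2⟩ := hcond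
            rw [hmemA₀] at h2
            rcases h2 with hlf | ⟨j, hj, hgj, hje⟩
            · exact absurd hlf (SD.spine_leaf_disjoint (SD.spine_edge_mem.mpr ⟨i, h1, rfl⟩))
            · rw [Sym2.eq_iff] at hje
              rcases hje with ⟨ha, hb⟩ | ⟨ha, hb⟩
              · have := SD.hinj (i := i) (j := j) (by omega) (by omega) ha
                rwa [this]
              · have h1' := SD.hinj (i := i) (j := j+1) (by omega) (by omega) ha
                have h2' := SD.hinj (i := i+1) (j := j) (by omega) (by omega) hb
                omega
          · rw [if_neg hcond] at h; exact absurd h (by simp)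
        · intro h
          have hm : s(f i, f (i+1)) ∈ A₀ := by
            rw [hmemA₀]; exact Or.inr ⟨i, hi, h, rfl⟩
          rw [if_pos ⟨by omega, hm⟩]
      exact CatAux.bool_eq_of_iff hiff
    have hiblkeq : CatAux.iblk (gOf s f A₀) 0 n = CatAux.iblk g 0 n :=
      CatAux.iblk_congr n 0 hgeq
    refine ⟨⟨A₀, hsub1, hsub2⟩, ?_⟩
    rw [hΦ]
    refine Subtype.ext ?_
    simp only []
    rw [hiblkeq]
    -- show the value equals P.map List.sum
    have hshape : (CatAux.iblk g 0 n).map (List.map (szOf T s f)) = P := by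
      refine CatAux.eq_of_shape _ _ ?_ ?_
      · rw [List.map_map]
        have hcomp : (List.length ∘ List.map (szOf T s f)) = List.length := by
          funext b; simp
        rw [hcomp]
        exact hgP
      · rw [← List.map_flatten, CatAux.iblk_flatten, ← hβ', hPflat]
    rw [← hshape, List.map_map]
    rfl
  refine ⟨Equiv.ofBijective Φ ⟨hΦinj, hΦsurj⟩, ?_⟩
  intro A
  have : (Equiv.ofBijective Φ ⟨hΦinj, hΦsurj⟩ A).val
      = (CatAux.iblk (gOf s f A.1) 0 n).map (fun b => (b.map (szOf T s f)).sum) := rfl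
  rw [this]
  exact SD.central A.1 A.2.1 A.2.2
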